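/- arXiv:2605.06414 — 3 statements merged into one kernel-verified Lean document; each statement's English description precedes it below -/
import Mathlib

section
/- Let G be a complex m×n matrix with ‖G v‖ ≥ γ₀ ‖v‖ for all v (γ₀ > 0), and suppose constants C ≥ 1, c > 0 satisfy ‖exp(s M)‖ ≤ C e^{−c s} for all s ≥ 0. Let b ∈ ℂⁿ, w(t) = exp(t M)(b, 0) with first block r(t), x(t) = ∫₀ᵗ r(τ) dτ, and let x⋆ = lim_{t→∞} x(t). Then for every t ≥ 0, ‖x⋆ − x(t)‖ ≤ (C/c) ‖w(t)‖. -/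
open scoped Matrix ComplexInnerProductSpace
open Filter MeasureTheory

noncomputable section

/-- `ℂ^k` with the ℓ² norm. -/
abbrev Evec (k : ℕ) : Type := EuclideanSpace ℂ (Fin k)

/-- The joint space `ℂⁿ ⊕ ℂᵐ` with the ℓ² norm. -/
abbrev Jvec (n m : ℕ) : Type := EuclideanSpace ℂ (Fin n ⊕ Fin m)

/-- A complex matrix viewed as a continuous linear map between Euclidean spaces,
so that `‖matCLM A‖` is the induced ℓ² operator norm. -/
noncomputable def matCLM {α β : Type*} [Fintype α] [Fintype β] [DecidableEq β]
    (A : Matrix α β ℂ) : EuclideanSpace ℂ β →L[ℂ] EuclideanSpace ℂ α :=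
  LinearMap.toContinuousLinearMap (Matrix.toEuclideanLin A)

/-- The block matrix `M = [[0, -Gᴴ], [G, -I]]` on `ℂⁿ ⊕ ℂᵐ`. -/
def blockM {m n : ℕ} (G : Matrix (Fin m) (Fin n) ℂ) :
    Matrix (Fin n ⊕ Fin m) (Fin n ⊕ Fin m) ℂ :=
  Matrix.fromBlocks 0 (-Gᴴ) G (-1)

/-- The matrix exponential `exp (t M)` as a continuous linear map on `ℂⁿ ⊕ ℂᵐ`. -/
noncomputable def expM {m n : ℕ} (G : Matrix (Fin m) (Fin n) ℂ) (t : ℝ) :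
    Jvec n m →L[ℂ] Jvec n m :=
  NormedSpace.exp (t • matCLM (blockM G))

/-- Join two blocks into a joint vector. -/
def joinV {n m : ℕ} (r : Evec n) (s : Evec m) : Jvec n m :=
  (WithLp.equiv 2 _).symm (Sum.elim ((WithLp.equiv 2 _) r) ((WithLp.equiv 2 _) s))

/-- First (residual `r`) block of a joint vector. -/
def rblock {n m : ℕ} (w : Jvec n m) : Evec n :=
  (WithLp.equiv 2 _).symm fun i => w (Sum.inl i)

/-- Second (residual `s`) block of a joint vector. -/
def sblock {n m : ℕ} (w : Jvec n m) : Evec m :=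
  (WithLp.equiv 2 _).symm fun j => w (Sum.inr j)

/-- Residual dynamics `w(t) = exp (t M) (b, 0)`. -/
noncomputable def wdyn {m n : ℕ} (G : Matrix (Fin m) (Fin n) ℂ) (b : Evec n) (t : ℝ) :
    Jvec n m :=
  expM G t (joinV b 0)

/-- Accumulator `x(t) = ∫₀ᵗ r(τ) dτ`. -/
noncomputable def xacc {m n : ℕ} (G : Matrix (Fin m) (Fin n) ℂ) (b : Evec n) (t : ℝ) :
    Evec n :=
  ∫ τ in (0:ℝ)..t, rblock (wdyn G b τ)

lemma rblock_norm_le {n m : ℕ} (w : Jvec n m) : ‖rblock w‖ ≤ ‖w‖ := by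
  rw [EuclideanSpace.norm_eq, EuclideanSpace.norm_eq]
  apply Real.sqrt_le_sqrt
  rw [Fintype.sum_sum_type]
  have h2 : (0:ℝ) ≤ ∑ j : Fin m, ‖w (Sum.inr j)‖ ^ 2 :=
    Finset.sum_nonneg fun _ _ => sq_nonneg _
  have h1 : ∑ i : Fin n, ‖rblock w i‖ ^ 2 = ∑ i : Fin n, ‖w (Sum.inl i)‖ ^ 2 := rfl
  rw [h1]; linarith

lemma expM_eq {m n : ℕ} (G : Matrix (Fin m) (Fin n) ℂ) (t : ℝ) :
    expM G t = NormedSpace.exp (((t : ℂ) • matCLM (blockM G) : Jvec n m →L[ℂ] Jvec n m)) := by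
  unfold expM
  congr 1

lemma expM_add {m n : ℕ} (G : Matrix (Fin m) (Fin n) ℂ) (a b : ℝ) :
    expM G (a + b) = expM G a * expM G b := by
  rw [expM_eq, expM_eq, expM_eq, Complex.ofReal_add]
  have h : ((a : ℂ) + (b : ℂ)) • matCLM (blockM G)
      = (a : ℂ) • matCLM (blockM G) + (b : ℂ) • matCLM (blockM G) :=
    add_smul (a:ℂ) (b:ℂ) (matCLM (blockM G))
  rw [h]
  letI : NormedAlgebra ℚ (Jvec n m →L[ℂ] Jvec n m) := NormedAlgebra.restrictScalars ℚ ℂ _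
  exact NormedSpace.exp_add_of_commute (((Commute.refl _).smul_right _).smul_left _)

lemma wdyn_shift {m n : ℕ} (G : Matrix (Fin m) (Fin n) ℂ) (b : Evec n) (t τ : ℝ) :
    wdyn G b τ = expM G (τ - t) (wdyn G b t) := by
  unfold wdyn
  rw [← ContinuousLinearMap.comp_apply, ← ContinuousLinearMap.mul_def, ← expM_add,
    sub_add_cancel]

def rblockL {n m : ℕ} : Jvec n m →ₗ[ℂ] Evec n where
  toFun := rblock
  map_add' _ _ := rfl
  map_smul' _ _ := rfl

lemma rblock_cont {n m : ℕ} : Continuous (rblock (n := n) (m := m)) :=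
  (rblockL : Jvec n m →ₗ[ℂ] Evec n).continuous_of_finiteDimensional

lemma wdyn_continuous {m n : ℕ} (G : Matrix (Fin m) (Fin n) ℂ) (b : Evec n) :
    Continuous (wdyn G b) := by
  unfold wdyn
  simp only [expM_eq]
  letI : NormedAlgebra ℚ (Jvec n m →L[ℂ] Jvec n m) := NormedAlgebra.restrictScalars ℚ ℂ _
  exact ((NormedSpace.exp_continuous.comp
    (Complex.continuous_ofReal.smul continuous_const)).clm_apply continuous_const)

lemma exp_int (c : ℝ) (hc : 0 < c) (u : ℝ) (hu : 0 ≤ u) :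
    ∫ x in (0:ℝ)..u, Real.exp (-c * x) ≤ 1 / c := by
  have h := intervalIntegral.integral_comp_mul_left (fun x => Real.exp x) (neg_ne_zero.mpr hc.ne')
    (a := 0) (b := u)
  simp only [mul_zero] at h
  rw [h, integral_exp, smul_eq_mul]
  have h1 : Real.exp (-c * u) ≤ 1 := Real.exp_le_one_iff.mpr (by nlinarith)
  have h2 : (0:ℝ) < Real.exp (-c*u) := Real.exp_pos _
  rw [Real.exp_zero, inv_neg, div_eq_mul_inv, one_mul]
  nlinarith [inv_pos.mpr hc, mul_inv_cancel₀ hc.ne']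

theorem stmt2_tail_bound {m n : ℕ} (hm : 0 < m) (hn : 0 < n)
    (γ₀ C c : ℝ) (hγ : 0 < γ₀) (hC : 1 ≤ C) (hc : 0 < c)
    (G : Matrix (Fin m) (Fin n) ℂ)
    (hG : ∀ v : Evec n, γ₀ * ‖v‖ ≤ ‖matCLM G v‖)
    (hstab : ∀ s : ℝ, 0 ≤ s → ‖expM G s‖ ≤ C * Real.exp (-c * s))
    (b : Evec n) (xstar : Evec n)
    (hlim : Tendsto (xacc G b) atTop (nhds xstar)) :
    ∀ t : ℝ, 0 ≤ t → ‖xstar - xacc G b t‖ ≤ (C / c) * ‖wdyn G b t‖ := by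
  intro t ht
  set K := ‖wdyn G b t‖ with hK
  have hK0 : 0 ≤ K := norm_nonneg _
  have hC0 : 0 < C := lt_of_lt_of_le one_pos hC
  have hcont : Continuous (fun τ => rblock (wdyn G b τ)) :=
    rblock_cont.comp (wdyn_continuous G b)
  have hint : ∀ a b' : ℝ, IntervalIntegrable (fun τ => rblock (wdyn G b τ))
      MeasureTheory.volume a b' := fun a b' => hcont.intervalIntegrable a b'
  have key : ∀ T, t ≤ T → ‖xacc G b T - xacc G b t‖ ≤ (C / c) * K := by
    intro T hT
    have hsplit : xacc G b T - xacc G b t = ∫ τ in t..T, rblock (wdyn G b τ) := by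
      unfold xacc
      rw [← intervalIntegral.integral_add_adjacent_intervals (hint 0 t) (hint t T)]
      abel
    rw [hsplit]
    have hwb : ∀ τ ∈ Set.Ioc t T, ‖rblock (wdyn G b τ)‖
        ≤ C * K * Real.exp (-c * (τ - t)) := by
      intro τ hτ
      have hτt : 0 ≤ τ - t := by linarith [hτ.1.le]
      calc ‖rblock (wdyn G b τ)‖ ≤ ‖wdyn G b τ‖ := rblock_norm_le _
        _ = ‖expM G (τ - t) (wdyn G b t)‖ := by rw [← wdyn_shift]
        _ ≤ ‖expM G (τ - t)‖ * K := (expM G (τ - t)).le_opNorm _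
        _ ≤ (C * Real.exp (-c * (τ - t))) * K :=
            mul_le_mul_of_nonneg_right (hstab _ hτt) hK0
        _ = C * K * Real.exp (-c * (τ - t)) := by ring
    have hbint : IntervalIntegrable (fun τ => C * K * Real.exp (-c * (τ - t)))
        MeasureTheory.volume t T := by
      exact (continuous_const.mul (Real.continuous_exp.comp
        (continuous_const.mul (continuous_id.sub continuous_const)))).intervalIntegrable _ _
    calc ‖∫ τ in t..T, rblock (wdyn G b τ)‖
        ≤ |∫ τ in t..T, C * K * Real.exp (-c * (τ - t))| := by
          apply intervalIntegral.norm_integral_le_abs_of_norm_le ?_ hbint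
          rw [Set.uIoc_of_le hT]
          filter_upwards [MeasureTheory.ae_restrict_mem measurableSet_Ioc] with τ hτ
          exact hwb τ hτ
      _ = ∫ τ in t..T, C * K * Real.exp (-c * (τ - t)) :=
          abs_of_nonneg (intervalIntegral.integral_nonneg hT fun τ _ => by positivity)
      _ = C * K * ∫ τ in t..T, Real.exp (-c * (τ - t)) :=
          intervalIntegral.integral_const_mul _ _
      _ ≤ C * K * (1 / c) := by
          apply mul_le_mul_of_nonneg_left _ (by positivity)
          have hcomp := intervalIntegral.integral_comp_sub_right
            (fun x => Real.exp (-c * x)) t (a := t) (b := T)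
          rw [hcomp, sub_self]
          exact exp_int c hc (T - t) (by linarith)
      _ = (C / c) * K := by ring
  have h1 : Tendsto (fun T => ‖xacc G b T - xacc G b t‖) atTop
      (nhds ‖xstar - xacc G b t‖) := ((hlim.sub tendsto_const_nhds).norm)
  exact le_of_tendsto h1 (Filter.eventually_atTop.2 ⟨t, key⟩)
end
end

section
/- Let G be a complex m×n matrix with ‖G v‖ ≥ γ₀ ‖v‖ for all v ∈ ℂⁿ (γ₀ > 0), K = (Gᴴ G)⁻¹ Gᴴ, and let 0 < η < γ₀. Define the Lyapunov functional E(r, s) = ‖r‖² + ‖s‖² − 2η Re⟨r, K s⟩ for r ∈ ℂⁿ, s ∈ ℂᵐ. Then for all r, s: (1 − η/γ₀)(‖r‖² + ‖s‖²) ≤ E(r, s) ≤ (1 + η/γ₀)(‖r‖² + ‖s‖²). -/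
open scoped Matrix ComplexInnerProductSpace
open Filter MeasureTheory

noncomputable section

lemma matCLM_mul {α β γ : Type*} [Fintype α] [Fintype β] [Fintype γ] [DecidableEq β] [DecidableEq γ]
    (A : Matrix α β ℂ) (B : Matrix β γ ℂ) (x : EuclideanSpace ℂ γ) :
    matCLM (A * B) x = matCLM A (matCLM B x) := by
  simp [matCLM, Matrix.toEuclideanLin_apply, Matrix.mulVec_mulVec]

lemma matCLM_adj {α β : Type*} [Fintype α] [Fintype β] [DecidableEq α] [DecidableEq β]
    (A : Matrix α β ℂ) (x : EuclideanSpace ℂ α) (y : EuclideanSpace ℂ β) :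
    ⟪matCLM Aᴴ x, y⟫ = ⟪x, matCLM A y⟫ := by
  have := Matrix.toEuclideanLin_conjTranspose_eq_adjoint A
  simp [matCLM, this, LinearMap.adjoint_inner_left]

lemma K_bound {m n : ℕ} (γ₀ : ℝ) (hγ : 0 < γ₀) (G : Matrix (Fin m) (Fin n) ℂ)
    (hG : ∀ v : EuclideanSpace ℂ (Fin n), γ₀ * ‖v‖ ≤ ‖matCLM G v‖)
    (s : EuclideanSpace ℂ (Fin m)) :
    γ₀ * ‖matCLM ((Gᴴ * G)⁻¹ * Gᴴ) s‖ ≤ ‖s‖ := by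
  -- invertibility of A := Gᴴ * G
  have hdet : IsUnit (Gᴴ * G).det := by
    by_contra h
    have h0 : (Gᴴ * G).det = 0 := by
      rcases eq_or_ne ((Gᴴ * G).det) 0 with h' | h'
      · exact h'
      · exact absurd (Ne.isUnit h') h
    obtain ⟨v, hv, hv0⟩ := (Matrix.exists_mulVec_eq_zero_iff).2 h0
    set v' : EuclideanSpace ℂ (Fin n) := (WithLp.equiv 2 _).symm v
    have hv'0 : matCLM (Gᴴ * G) v' = 0 := by
      simp [matCLM, Matrix.toEuclideanLin_apply, v', hv0]
    have hinner : ⟪matCLM G v', matCLM G v'⟫ = 0 := by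
      rw [← matCLM_adj G (matCLM G v') v', ← matCLM_mul, hv'0]
      simp
    have hGv : ‖matCLM G v'‖ = 0 := by
      rw [inner_self_eq_zero.mp hinner, norm_zero]
    have := hG v'
    rw [hGv] at this
    have : ‖v'‖ = 0 := by nlinarith [norm_nonneg v']
    have : v' = 0 := norm_eq_zero.mp this
    apply hv
    have : (WithLp.equiv 2 (Fin n → ℂ)) v' = 0 := by rw [this]; rfl
    simpa [v'] using this
  have hAK : Gᴴ * G * ((Gᴴ * G)⁻¹ * Gᴴ) = Gᴴ := by
    rw [← Matrix.mul_assoc, Matrix.mul_nonsing_inv _ hdet, Matrix.one_mul]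
  set v := matCLM ((Gᴴ * G)⁻¹ * Gᴴ) s with hv
  set w := matCLM G v with hw
  have key : (‖w‖ : ℝ) ^ 2 = (⟪s, w⟫).re := by
    have h1 : ⟪matCLM Gᴴ w, v⟫ = ⟪w, w⟫ := matCLM_adj G w v
    have h2 : matCLM Gᴴ w = matCLM Gᴴ s := by
      have : matCLM (Gᴴ * G * ((Gᴴ * G)⁻¹ * Gᴴ)) s = matCLM Gᴴ w := by
        rw [matCLM_mul, matCLM_mul]
      rw [← this, hAK]
    rw [h2] at h1
    have h3 : ⟪matCLM Gᴴ s, v⟫ = ⟪s, matCLM G v⟫ := matCLM_adj G s v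
    rw [h3] at h1
    have hnorm : (⟪w, w⟫).re = ‖w‖ ^ 2 := by
      simpa using inner_self_eq_norm_sq (𝕜 := ℂ) (x := w)
    have := congrArg Complex.re h1
    rw [← hw, hnorm] at this
    exact this.symm
  have hwle : ‖w‖ ≤ ‖s‖ := by
    rcases eq_or_lt_of_le (norm_nonneg w) with h0 | h0
    · rw [← h0]; exact norm_nonneg s
    · have hre : (⟪s, w⟫).re ≤ ‖s‖ * ‖w‖ := by
        calc (⟪s, w⟫).re ≤ ‖⟪s, w⟫‖ := Complex.re_le_norm _
          _ ≤ ‖s‖ * ‖w‖ := norm_inner_le_norm s w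
      nlinarith
  calc γ₀ * ‖v‖ ≤ ‖w‖ := hG v
    _ ≤ ‖s‖ := hwle
theorem stmt5_lyapunov_norm_equivalence {m n : ℕ} (hm : 0 < m) (hn : 0 < n)
    (γ₀ η : ℝ) (hγ : 0 < γ₀) (hη0 : 0 < η) (hη : η < γ₀)
    (G : Matrix (Fin m) (Fin n) ℂ)
    (hG : ∀ v : Evec n, γ₀ * ‖v‖ ≤ ‖matCLM G v‖) :
    ∀ (r : Evec n) (s : Evec m),
      (1 - η / γ₀) * (‖r‖ ^ 2 + ‖s‖ ^ 2) ≤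
        ‖r‖ ^ 2 + ‖s‖ ^ 2 - 2 * η * (⟪r, matCLM ((Gᴴ * G)⁻¹ * Gᴴ) s⟫).re ∧
      ‖r‖ ^ 2 + ‖s‖ ^ 2 - 2 * η * (⟪r, matCLM ((Gᴴ * G)⁻¹ * Gᴴ) s⟫).re ≤
        (1 + η / γ₀) * (‖r‖ ^ 2 + ‖s‖ ^ 2) := by
  intro r s
  set c : ℝ := (⟪r, matCLM ((Gᴴ * G)⁻¹ * Gᴴ) s⟫).re with hc
  have hKs : γ₀ * ‖matCLM ((Gᴴ * G)⁻¹ * Gᴴ) s‖ ≤ ‖s‖ := K_bound γ₀ hγ G hG s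
  have habs : |c| ≤ ‖r‖ * ‖matCLM ((Gᴴ * G)⁻¹ * Gᴴ) s‖ := by
    calc |c| ≤ ‖⟪r, matCLM ((Gᴴ * G)⁻¹ * Gᴴ) s⟫‖ := Complex.abs_re_le_norm _
      _ ≤ _ := norm_inner_le_norm _ _
  have hgc : γ₀ * |c| ≤ ‖r‖ * ‖s‖ := by
    calc γ₀ * |c| ≤ γ₀ * (‖r‖ * ‖matCLM ((Gᴴ * G)⁻¹ * Gᴴ) s‖) :=
          mul_le_mul_of_nonneg_left habs hγ.le
      _ = ‖r‖ * (γ₀ * ‖matCLM ((Gᴴ * G)⁻¹ * Gᴴ) s‖) := by ring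
      _ ≤ ‖r‖ * ‖s‖ := mul_le_mul_of_nonneg_left hKs (norm_nonneg r)
  have hcu : c ≤ |c| := le_abs_self c
  have hcl : -|c| ≤ c := neg_abs_le c
  have key : 2 * η * |c| ≤ η / γ₀ * (‖r‖ ^ 2 + ‖s‖ ^ 2) := by
    rw [div_mul_eq_mul_div, le_div_iff₀ hγ]
    nlinarith [mul_nonneg hη0.le (sq_nonneg (‖r‖ - ‖s‖)), abs_nonneg c]
  constructor <;> nlinarith [norm_nonneg r, norm_nonneg s]
end
end

section
/- Let G be a complex m×n matrix, b ∈ ℂⁿ, and let w(t) = exp(t M)(b, 0) with blocks (r(t), s(t)). Then for every t ∈ ℝ, the real-valued function u(t) = ‖r(t)‖² + ‖s(t)‖² is differentiable at t with derivative u′(t) = −2 ‖s(t)‖². -/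
open scoped Matrix ComplexInnerProductSpace
open Filter MeasureTheory

noncomputable section

section Aux

lemma matCLM_apply' {α β : Type*} [Fintype α] [Fintype β] [DecidableEq β] (A : Matrix α β ℂ)
    (x : EuclideanSpace ℂ β) (i : α) : matCLM A x i = ∑ j, A i j * x j := rfl

lemma norm_sq_blocks {n m : ℕ} (w : Jvec n m) :
    ‖rblock w‖ ^ 2 + ‖sblock w‖ ^ 2 = ‖w‖ ^ 2 := by
  have h1 : ‖rblock w‖ ^ 2 = ∑ i, ‖w (Sum.inl i)‖ ^ 2 := by
    rw [EuclideanSpace.norm_eq, Real.sq_sqrt (by positivity)]; rfl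
  have h2 : ‖sblock w‖ ^ 2 = ∑ j, ‖w (Sum.inr j)‖ ^ 2 := by
    rw [EuclideanSpace.norm_eq, Real.sq_sqrt (by positivity)]; rfl
  have h3 : ‖w‖ ^ 2 = ∑ k, ‖w k‖ ^ 2 := by
    rw [EuclideanSpace.norm_eq, Real.sq_sqrt (by positivity)]
  rw [h1, h2, h3, Fintype.sum_sum_type]

lemma re_inner_M {m n : ℕ} (G : Matrix (Fin m) (Fin n) ℂ) (w : Jvec n m) :
    (⟪(matCLM (blockM G)) w, w⟫).re = -‖sblock w‖ ^ 2 := by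
  have happ : ∀ k, matCLM (blockM G) w k = ∑ l, blockM G k l * w l := fun k => rfl
  have hip : ⟪(matCLM (blockM G)) w, w⟫
      = ∑ k, starRingEnd ℂ (matCLM (blockM G) w k) * w k := by
    simp [PiLp.inner_apply, RCLike.inner_apply]
    congr 1 <;> exact Finset.sum_congr rfl fun _ _ => mul_comm _ _
  set z : ℂ := ∑ j, ∑ i, starRingEnd ℂ (G j i) * starRingEnd ℂ (w (Sum.inl i)) * w (Sum.inr j)
    with hz
  have hsq : (∑ j, starRingEnd ℂ (w (Sum.inr j)) * w (Sum.inr j)) = (‖sblock w‖ ^ 2 : ℝ) := by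
    have : ‖sblock w‖ ^ 2 = ∑ j, ‖w (Sum.inr j)‖ ^ 2 := by
      rw [EuclideanSpace.norm_eq, Real.sq_sqrt (by positivity)]; rfl
    rw [this]
    push_cast
    congr 1; ext j
    rw [Complex.conj_mul']
  have hmain : ⟪(matCLM (blockM G)) w, w⟫ = -starRingEnd ℂ z + z - (‖sblock w‖ ^ 2 : ℝ) := by
    have A : ∀ i, matCLM (blockM G) w (Sum.inl i)
        = -∑ j, starRingEnd ℂ (G j i) * w (Sum.inr j) := by
      intro i
      rw [happ, Fintype.sum_sum_type]
      simp [blockM, Matrix.conjTranspose_apply, neg_mul, Finset.sum_neg_distrib]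
    have B : ∀ j, matCLM (blockM G) w (Sum.inr j)
        = (∑ i, G j i * w (Sum.inl i)) - w (Sum.inr j) := by
      intro j
      rw [happ, Fintype.sum_sum_type]
      simp [blockM, Matrix.one_apply, ite_mul, sub_eq_add_neg, Finset.sum_ite_eq,
        neg_mul, Finset.sum_neg_distrib]
    have e1 : (∑ i, starRingEnd ℂ (matCLM (blockM G) w (Sum.inl i)) * w (Sum.inl i))
        = -starRingEnd ℂ z := by
      simp only [A, hz, map_neg, map_sum, map_mul, Complex.conj_conj, neg_mul,
        Finset.sum_neg_distrib, Finset.sum_mul, neg_inj]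
      rw [Finset.sum_comm]
      refine Finset.sum_congr rfl fun i _ => Finset.sum_congr rfl fun j _ => ?_
      ring
    have e2 : (∑ j, starRingEnd ℂ (matCLM (blockM G) w (Sum.inr j)) * w (Sum.inr j))
        = z - (‖sblock w‖ ^ 2 : ℝ) := by
      simp only [B, map_sub, map_sum, map_mul, sub_mul, Finset.sum_sub_distrib, hsq, hz,
        Finset.sum_mul]
    rw [hip, Fintype.sum_sum_type, e1, e2]
    ring
  rw [hmain]
  simp [Complex.sub_re, Complex.add_re, Complex.neg_re, Complex.conj_re, ← Complex.ofReal_pow]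

lemma hasDerivAt_wdyn {m n : ℕ} (G : Matrix (Fin m) (Fin n) ℂ) (b : Evec n) (t : ℝ) :
    HasDerivAt (fun τ : ℝ => wdyn G b τ) (matCLM (blockM G) (wdyn G b t)) t := by
  have h : HasDerivAt (fun u : ℝ => NormedSpace.exp (u • matCLM (blockM G)))
      (matCLM (blockM G) * NormedSpace.exp (t • matCLM (blockM G))) t := by
    simpa using
      hasDerivAt_exp_smul_const' (𝕂 := ℝ) (matCLM (blockM G)) t
  have h2 := ((ContinuousLinearMap.apply ℂ (Jvec n m) (joinV b 0)).restrictScalars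
    ℝ).hasFDerivAt.comp_hasDerivAt t h
  simp only [wdyn, expM]
  exact h2

end Aux

theorem stmt6_norm_sq_derivative {m n : ℕ} (hm : 0 < m) (hn : 0 < n)
    (G : Matrix (Fin m) (Fin n) ℂ) (b : Evec n) :
    ∀ t : ℝ,
      HasDerivAt
        (fun τ : ℝ => ‖rblock (wdyn G b τ)‖ ^ 2 + ‖sblock (wdyn G b τ)‖ ^ 2)
        (-2 * ‖sblock (wdyn G b t)‖ ^ 2) t := by
  intro t
  have hw := hasDerivAt_wdyn G b t
  have hinner := HasDerivAt.inner (𝕜 := ℂ) hw hw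
  have hre := (Complex.reCLM.hasFDerivAt.comp_hasDerivAt t hinner)
  have hfun : (fun τ : ℝ => ‖rblock (wdyn G b τ)‖ ^ 2 + ‖sblock (wdyn G b τ)‖ ^ 2)
      = fun τ : ℝ => Complex.reCLM ⟪wdyn G b τ, wdyn G b τ⟫ := by
    funext τ
    have := inner_self_eq_norm_sq (𝕜 := ℂ) (wdyn G b τ)
    rw [norm_sq_blocks, ← this]
    rfl
  have hval : Complex.reCLM (⟪wdyn G b t, matCLM (blockM G) (wdyn G b t)⟫
      + ⟪matCLM (blockM G) (wdyn G b t), wdyn G b t⟫) = -2 * ‖sblock (wdyn G b t)‖ ^ 2 := by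
    have hsymm : (⟪wdyn G b t, matCLM (blockM G) (wdyn G b t)⟫ : ℂ).re
        = (⟪matCLM (blockM G) (wdyn G b t), wdyn G b t⟫ : ℂ).re := by
      rw [← inner_conj_symm]
      exact Complex.conj_re _
    have := re_inner_M G (wdyn G b t)
    simp only [Complex.reCLM_apply, Complex.add_re, hsymm, this]
    ring
  rw [hfun, ← hval]
  exact hre
end
end
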